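/- Φ and Φ⁻¹ map into the correct sets: for every unit m ∈ (ℤ/N)ˣ, the point Φ⁻¹(m) = ((m²+D)(m²−D)⁻¹, 2m(m²−D)⁻¹) belongs to P* (its second coordinate is a unit and its coordinates satisfy x² − Dy² = 1); and for every (x,y) ∈ P*, the element Φ(x,y) = (1+x)·y⁻¹ is a unit of ℤ/N. -/

import Mathlib

section Aux

lemma aux_unit_iff (p q : ℕ) (hp : p.Prime) (hq : q.Prime) (u : ZMod (p * q)) :
    IsUnit u ↔ (ZMod.castHom (dvd_mul_right p q) (ZMod p) u ≠ 0 ∧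
      ZMod.castHom (dvd_mul_left q p) (ZMod q) u ≠ 0) := by
  haveI : NeZero (p * q) := ⟨Nat.mul_ne_zero hp.pos.ne' hq.pos.ne'⟩
  haveI : NeZero p := ⟨hp.pos.ne'⟩
  haveI : NeZero q := ⟨hq.pos.ne'⟩
  have hu : u = ((u.val : ℕ) : ZMod (p * q)) := by
    simp [ZMod.natCast_val, ZMod.cast_id]
  rw [hu, ZMod.isUnit_iff_coprime, Nat.coprime_mul_iff_right]
  have h1 : ZMod.castHom (dvd_mul_right p q) (ZMod p) ((u.val : ℕ) : ZMod (p*q)) = ((u.val : ℕ) : ZMod p) := by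
    simp
  have h2 : ZMod.castHom (dvd_mul_left q p) (ZMod q) ((u.val : ℕ) : ZMod (p*q)) = ((u.val : ℕ) : ZMod q) := by
    simp
  rw [h1, h2, Ne, Ne, ZMod.natCast_eq_zero_iff, ZMod.natCast_eq_zero_iff]
  constructor
  · rintro ⟨a, b⟩
    exact ⟨fun h => (hp.coprime_iff_not_dvd.mp a.symm) h, fun h => (hq.coprime_iff_not_dvd.mp b.symm) h⟩
  · rintro ⟨a, b⟩
    exact ⟨(hp.coprime_iff_not_dvd.mpr a).symm, (hq.coprime_iff_not_dvd.mpr b).symm⟩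

end Aux

theorem phi_phiInv_wellDefined (p q : ℕ) (hp : p.Prime) (hq : q.Prime)
    (hpodd : Odd p) (hqodd : Odd q) (hpq : p ≠ q)
    (D : ZMod (p * q))
    (hDp : ¬ ∃ t : ZMod p, t ^ 2 = ZMod.castHom (dvd_mul_right p q) (ZMod p) D)
    (hDq : ¬ ∃ t : ZMod q, t ^ 2 = ZMod.castHom (dvd_mul_left q p) (ZMod q) D)
    (hDp' : ¬ ∃ t : ZMod p, t ^ 2 = ZMod.castHom (dvd_mul_right p q) (ZMod p) (-D))
    (hDq' : ¬ ∃ t : ZMod q, t ^ 2 = ZMod.castHom (dvd_mul_left q p) (ZMod q) (-D)) :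
    (∀ m : ZMod (p * q), IsUnit m →
      IsUnit (2 * m * (m ^ 2 - D)⁻¹) ∧
      ((m ^ 2 + D) * (m ^ 2 - D)⁻¹) ^ 2 - D * (2 * m * (m ^ 2 - D)⁻¹) ^ 2 = 1) ∧
    (∀ x y : ZMod (p * q), IsUnit y → x ^ 2 - D * y ^ 2 = 1 →
      IsUnit ((1 + x) * y⁻¹)) := by
  haveI : Fact p.Prime := ⟨hp⟩
  haveI : Fact q.Prime := ⟨hq⟩
  set fp := ZMod.castHom (dvd_mul_right p q) (ZMod p) with hfp
  set fq := ZMod.castHom (dvd_mul_left q p) (ZMod q) with hfq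
  -- D is nonzero mod p and mod q
  have hDp0 : fp D ≠ 0 := fun h => hDp ⟨0, by simp [h]⟩
  have hDq0 : fq D ≠ 0 := fun h => hDq ⟨0, by simp [h]⟩
  -- m^2 - D is a unit for any m
  have hsub : ∀ m : ZMod (p * q), IsUnit (m ^ 2 - D) := by
    intro m
    rw [aux_unit_iff p q hp hq]
    constructor
    · intro h
      rw [map_sub, map_pow, sub_eq_zero] at h
      exact hDp ⟨fp m, h⟩
    · intro h
      rw [map_sub, map_pow, sub_eq_zero] at h
      exact hDq ⟨fq m, h⟩
  -- 2 is a unit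
  have h2 : IsUnit (2 : ZMod (p * q)) := by
    rw [aux_unit_iff p q hp hq]
    constructor
    · rw [map_ofNat]
      intro h
      have hdvd : (p : ℕ) ∣ 2 := (ZMod.natCast_eq_zero_iff 2 p).mp (by exact_mod_cast h)
      have hp2 : p = 2 := (Nat.prime_dvd_prime_iff_eq hp Nat.prime_two).mp hdvd
      rw [hp2] at hpodd
      exact (Nat.not_odd_iff_even.mpr even_two) hpodd
    · rw [map_ofNat]
      intro h
      have hdvd : (q : ℕ) ∣ 2 := (ZMod.natCast_eq_zero_iff 2 q).mp (by exact_mod_cast h)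
      have hq2 : q = 2 := (Nat.prime_dvd_prime_iff_eq hq Nat.prime_two).mp hdvd
      rw [hq2] at hqodd
      exact (Nat.not_odd_iff_even.mpr even_two) hqodd
  have hinvunit : ∀ u : ZMod (p * q), IsUnit u → IsUnit u⁻¹ := by
    intro u hu
    exact IsUnit.of_mul_eq_one _ (ZMod.inv_mul_of_unit u hu)
  constructor
  · intro m hm
    have hs := hsub m
    have hss : (m ^ 2 - D) * (m ^ 2 - D)⁻¹ = 1 := ZMod.mul_inv_of_unit _ hs
    refine ⟨(h2.mul hm).mul (hinvunit _ hs), ?_⟩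
    have : ((m ^ 2 + D) * (m ^ 2 - D)⁻¹) ^ 2 - D * (2 * m * (m ^ 2 - D)⁻¹) ^ 2
        = ((m ^ 2 - D) * (m ^ 2 - D)⁻¹) ^ 2 := by ring
    rw [this, hss, one_pow]
  · intro x y hy heq
    have hyp : fp y ≠ 0 := ((aux_unit_iff p q hp hq y).mp hy).1
    have hyq : fq y ≠ 0 := ((aux_unit_iff p q hp hq y).mp hy).2
    have h1x : IsUnit (1 + x) := by
      rw [aux_unit_iff p q hp hq]
      constructor
      · intro h
        rw [map_add, map_one, add_eq_zero_iff_eq_neg] at h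
        have := congrArg fp heq
        rw [map_sub, map_pow, map_mul, map_pow, map_one] at this
        have hx : fp x = -1 := by linear_combination h
        have : fp D * fp y ^ 2 = 0 := by
          have h2' : fp x ^ 2 = 1 := by rw [hx]; ring
          rw [h2'] at this; linear_combination -this
        rcases mul_eq_zero.mp this with hc | hc
        · exact hDp0 hc
        · exact hyp (pow_eq_zero_iff (by norm_num) |>.mp hc)
      · intro h
        rw [map_add, map_one, add_eq_zero_iff_eq_neg] at h
        have := congrArg fq heq
        rw [map_sub, map_pow, map_mul, map_pow, map_one] at this
        have hx : fq x = -1 := by linear_combination h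
        have : fq D * fq y ^ 2 = 0 := by
          have h2' : fq x ^ 2 = 1 := by rw [hx]; ring
          rw [h2'] at this; linear_combination -this
        rcases mul_eq_zero.mp this with hc | hc
        · exact hDq0 hc
        · exact hyq (pow_eq_zero_iff (by norm_num) |>.mp hc)
    exact h1x.mul (hinvunit _ hy)
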